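/- Let V' ⊂ ℝⁿ⁻¹ be open and bounded, let h, h_p : V' → ℝ be measurable with h ≤ h_p pointwise, and suppose F ∈ H¹(ℝⁿ). Then ∫_{V'} |F(z, h_p(z)) - F(z, h(z))|² dz ≤ sup_{z∈V'} |h_p(z) - h(z)| · ‖F‖²_{H¹(ℝⁿ)}, provided F is (a.e. representative) absolutely continuous on almost every vertical line. (Here F(z,t) denotes evaluation of a precise representative.) -/

import Mathlib

open MeasureTheory Set

lemma cs_helper {a b : ℝ} (hab : a ≤ b) {f : ℝ → ℝ}
    (hm : AEStronglyMeasurable f (volume.restrict (Ioc a b)))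
    (hnn : ∀ t, 0 ≤ f t)
    (hint : Integrable (fun t => f t ^ 2) (volume.restrict (Ioc a b))) :
    (∫ t in Ioc a b, f t) ^ 2 ≤ (b - a) * ∫ t in Ioc a b, f t ^ 2 := by
  set μ := volume.restrict (Ioc a b) with hμ
  haveI : IsFiniteMeasure μ := by
    constructor
    rw [hμ, Measure.restrict_apply_univ, Real.volume_Ioc]
    exact ENNReal.ofReal_lt_top
  have hpq : Real.HolderConjugate 2 2 := by
    exact Real.HolderConjugate.two_two
  have h2 : MemLp f (ENNReal.ofReal 2) μ := by
    rw [show ENNReal.ofReal 2 = 2 by norm_num]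
    exact (memLp_two_iff_integrable_sq hm).mpr hint
  have h1 : MemLp (fun _ : ℝ => (1 : ℝ)) (ENNReal.ofReal 2) μ := memLp_const 1
  have key := integral_mul_le_Lp_mul_Lq_of_nonneg hpq
    (Filter.Eventually.of_forall fun t => hnn t)
    (Filter.Eventually.of_forall fun _ => zero_le_one) h2 h1
  simp only [mul_one, one_pow] at key
  have hμreal : (∫ _ : ℝ, (1:ℝ) ∂μ) = b - a := by
    rw [integral_const, smul_eq_mul, mul_one, hμ, measureReal_restrict_apply_univ,
      Real.volume_real_Ioc_of_le hab]
  have hrpow : ∀ t, f t ^ (2:ℝ) = f t ^ 2 := fun t => by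
    rw [show (2:ℝ) = ((2:ℕ):ℝ) by norm_num, Real.rpow_natCast]
  simp only [Real.one_rpow, hrpow, hμreal] at key
  have hA : 0 ≤ ∫ t, f t ^ 2 ∂μ := integral_nonneg fun t => sq_nonneg _
  have hf0 : 0 ≤ ∫ t, f t ∂μ := integral_nonneg hnn
  calc (∫ t in Ioc a b, f t) ^ 2
      ≤ ((∫ t, f t ^ 2 ∂μ) ^ (1/2 : ℝ) * (b - a) ^ (1/2 : ℝ)) ^ 2 := by
        apply pow_le_pow_left₀ hf0 key 2
    _ = (b - a) * ∫ t in Ioc a b, f t ^ 2 := by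
        rw [mul_pow, ← Real.rpow_natCast ((∫ t, f t ^ 2 ∂μ) ^ (1/2:ℝ)) 2,
          ← Real.rpow_natCast ((b - a) ^ (1/2:ℝ)) 2,
          ← Real.rpow_mul hA, ← Real.rpow_mul (by linarith)]
        norm_num [mul_comm]
        exact Or.inl rfl

/-- If `F ∈ H¹(ℝⁿ)` (encoded via a function `F` on `ℝⁿ⁻¹ × ℝ` whose
distributional `n`-th partial derivative is `G ∈ L²` and which is absolutely continuous
on a.e. vertical line, so that `F(z,h_p(z)) - F(z,h(z)) = ∫_{h(z)}^{h_p(z)} G(z,t) dt`),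
and `h ≤ h_p` are bounded measurable on a bounded open `V' ⊂ ℝⁿ⁻¹`, then
`∫_{V'} |F(z,h_p(z)) - F(z,h(z))|² dz ≤ sup_{V'} |h_p - h| ⋅ ‖F‖²_{H¹}`,
where `‖F‖²_{H¹}` is any bound dominating `∫ |G|²`. -/
theorem stmt3 {n : ℕ} (hn : 2 ≤ n)
    (V' : Set (Fin (n - 1) → ℝ)) (hV'open : IsOpen V') (hV'bdd : Bornology.IsBounded V')
    (h hp : (Fin (n - 1) → ℝ) → ℝ) (hmeas : Measurable h) (hpmeas : Measurable hp)
    (hbddh : ∃ c, ∀ z ∈ V', |h z| ≤ c) (hbddhp : ∃ c, ∀ z ∈ V', |hp z| ≤ c)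
    (hle : ∀ z, h z ≤ hp z)
    (F G : (Fin (n - 1) → ℝ) × ℝ → ℂ)
    (hG : Integrable (fun x => ‖G x‖ ^ 2) (volume : Measure ((Fin (n - 1) → ℝ) × ℝ)))
    (hFTC : ∀ᵐ z ∂(volume.restrict V'),
      F (z, hp z) - F (z, h z) = ∫ t in (h z)..(hp z), G (z, t))
    (H1normSq : ℝ)
    (hH1 : (∫ x, ‖G x‖ ^ 2 ∂(volume : Measure ((Fin (n - 1) → ℝ) × ℝ))) ≤ H1normSq) :
    ∫ z in V', ‖F (z, hp z) - F (z, h z)‖ ^ 2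
      ≤ (⨆ z ∈ V', |hp z - h z|) * H1normSq := by
  set M : ℝ := ⨆ z ∈ V', |hp z - h z| with hM
  have hMnonneg : 0 ≤ M :=
    Real.iSup_nonneg fun z => Real.iSup_nonneg fun _ => abs_nonneg _
  -- M bounds hp z - h z on V'
  obtain ⟨c1, hc1⟩ := hbddh
  obtain ⟨c2, hc2⟩ := hbddhp
  have hBdd : BddAbove (range fun z => ⨆ _ : z ∈ V', |hp z - h z|) := by
    refine ⟨max 0 (c2 + c1), ?_⟩
    rintro x ⟨z, rfl⟩
    by_cases hz : z ∈ V'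
    · simp only
      rw [ciSup_pos (f := fun _ : z ∈ V' => |hp z - h z|) hz]
      refine le_trans ?_ (le_max_right _ _)
      calc |hp z - h z| ≤ |hp z| + |h z| := abs_sub _ _
        _ ≤ c2 + c1 := add_le_add (hc2 z hz) (hc1 z hz)
    · simp [hz]
  have hMle : ∀ z ∈ V', hp z - h z ≤ M := by
    intro z hz
    calc hp z - h z ≤ |hp z - h z| := le_abs_self _
      _ = ⨆ _ : z ∈ V', |hp z - h z| := (ciSup_pos (f := fun _ : z ∈ V' => |hp z - h z|) hz).symm
      _ ≤ M := le_ciSup hBdd z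
  -- Fubini data
  rw [show (volume : Measure ((Fin (n - 1) → ℝ) × ℝ)) = Measure.prod volume volume from
    Measure.volume_eq_prod _ _] at hG hH1
  have hsec : ∀ᵐ z : Fin (n - 1) → ℝ ∂volume,
      Integrable (fun t => ‖G (z, t)‖ ^ 2) volume := hG.prod_right_ae
  set I : (Fin (n - 1) → ℝ) → ℝ := fun z => ∫ t, ‖G (z, t)‖ ^ 2 with hI
  have hIint : Integrable I volume := hG.integral_prod_left
  have hInonneg : ∀ z, 0 ≤ I z := fun z => integral_nonneg fun t => sq_nonneg _
  -- pointwise bound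
  have hpt : ∀ᵐ z ∂(volume.restrict V'),
      ‖F (z, hp z) - F (z, h z)‖ ^ 2 ≤ M * I z := by
    filter_upwards [hFTC, ae_restrict_of_ae hsec, ae_restrict_mem hV'open.measurableSet]
      with z hz hGz hzV
    rw [hz]
    by_cases hcase : IntervalIntegrable (fun t => G (z, t)) volume (h z) (hp z)
    · have hnorm : ‖∫ t in (h z)..(hp z), G (z, t)‖
          ≤ ∫ t in Ioc (h z) (hp z), ‖G (z, t)‖ := by
        rw [← intervalIntegral.integral_of_le (hle z)]
        exact intervalIntegral.norm_integral_le_integral_norm (hle z)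
      calc ‖∫ t in (h z)..(hp z), G (z, t)‖ ^ 2
          ≤ (∫ t in Ioc (h z) (hp z), ‖G (z, t)‖) ^ 2 :=
            pow_le_pow_left₀ (norm_nonneg _) hnorm 2
        _ ≤ (hp z - h z) * ∫ t in Ioc (h z) (hp z), ‖G (z, t)‖ ^ 2 :=
            cs_helper (hle z) hcase.1.aestronglyMeasurable.norm (fun t => norm_nonneg _)
              (hGz.integrableOn)
        _ ≤ M * I z := by
            apply mul_le_mul (hMle z hzV) (setIntegral_le_integral hGz
              (Filter.Eventually.of_forall fun t => sq_nonneg _))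
              (integral_nonneg fun t => sq_nonneg _) hMnonneg
    · rw [intervalIntegral.integral_undef hcase]
      simpa using mul_nonneg hMnonneg (hInonneg z)
  -- integrate
  calc ∫ z in V', ‖F (z, hp z) - F (z, h z)‖ ^ 2
      ≤ ∫ z in V', M * I z := by
        apply integral_mono_of_nonneg
          (Filter.Eventually.of_forall fun z => sq_nonneg _)
          ((hIint.const_mul M).integrableOn) hpt
    _ = M * ∫ z in V', I z := by rw [integral_const_mul]
    _ ≤ M * ∫ z, I z := by
        apply mul_le_mul_of_nonneg_left
          (setIntegral_le_integral hIint (Filter.Eventually.of_forall hInonneg)) hMnonneg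
    _ = M * ∫ x, ‖G x‖ ^ 2 ∂(Measure.prod volume volume) := by
        rw [integral_prod _ hG]
    _ ≤ M * H1normSq := mul_le_mul_of_nonneg_left hH1 hMnonneg
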